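/- Let a > 0 and η : [0,a] → (0,∞) on (0,a] be a continuous non-decreasing function with η(0)=0. Let f : [t₀,T] → [0,a] measurable, v locally integrable nonnegative, and c > 0 with f(t) ≤ c + ∫_{t₀}^t v(s) η(f(s)) ds for a.e. t ∈ [t₀,T]. Define M(x) = ∫_x^a dz/η(z). Then M(c) ≤ M(f(t)) + ∫_{t₀}^t v(s) ds for a.e. t. -/

import Mathlib

open MeasureTheory

/-- `M(x) = ∫_x^a dz/η(z)`, valued in `[0,∞]`. -/
noncomputable def osgoodM (η : ℝ → ℝ) (a x : ℝ) : ENNReal :=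
  ∫⁻ z in Set.Ioc x a, ENNReal.ofReal (1 / η z)

/-- Change-of-variables inequality for a monotone primitive `G s = c + ∫_{t₀}^s g`
and an antitone nonnegative kernel `h₀`. -/
lemma osgood_cov (t₀ t c : ℝ) (ht : t₀ ≤ t) (hc : 0 < c)
    (g : ℝ → ℝ) (hgm : AEMeasurable g volume) (hgnn : ∀ s, 0 ≤ g s)
    (hgint : Integrable g)
    (h₀ : ℝ → ℝ) (hhm : Measurable h₀) (hhnn : ∀ z, 0 ≤ h₀ z)
    (hanti : AntitoneOn h₀ (Set.Ioi 0)) :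
    ∫⁻ z in Set.Ioc c (c + ∫ u in t₀..t, g u), ENNReal.ofReal (h₀ z)
      ≤ ∫⁻ s in Set.Ioc t₀ t,
          ENNReal.ofReal (h₀ (c + ∫ u in t₀..s, g u)) * ENNReal.ofReal (g s) := by
  set G : ℝ → ℝ := fun s => c + ∫ u in t₀..s, g u with hGdef
  have hGcont : Continuous G :=
    continuous_const.add (intervalIntegral.continuous_primitive
      (fun a b => hgint.intervalIntegrable) t₀)
  have hGmono : Monotone G := by
    intro s s' hss'
    have hadd : (∫ u in t₀..s, g u) + ∫ u in s..s', g u = ∫ u in t₀..s', g u :=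
      intervalIntegral.integral_add_adjacent_intervals hgint.intervalIntegrable
        hgint.intervalIntegrable
    have hnn : 0 ≤ ∫ u in s..s', g u :=
      intervalIntegral.integral_nonneg hss' (fun u _ => hgnn u)
    simp only [hGdef]
    linarith
  have hGt₀ : G t₀ = c := by simp [hGdef]
  have hGge : ∀ s, t₀ ≤ s → c ≤ G s := by
    intro s hs
    have := hGmono hs
    rwa [hGt₀] at this
  -- key sublevel estimate
  have key : ∀ l : ℝ,
      (volume.restrict (Set.Ioc c (G t))) {z | l < h₀ z}
        ≤ ((volume.restrict (Set.Ioc t₀ t)).withDensity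
            (fun s => ENNReal.ofReal (g s))) {s | l < h₀ (G s)} := by
    intro l
    have hmeasA : MeasurableSet {z | l < h₀ z} := hhm measurableSet_Ioi
    have hmeasS : MeasurableSet {s | l < h₀ (G s)} :=
      (hhm.comp hGcont.measurable) measurableSet_Ioi
    rw [Measure.restrict_apply hmeasA,
      withDensity_apply _ hmeasS]
    set A : Set ℝ := {z | l < h₀ z} ∩ Set.Ioc c (G t) with hAdef
    rcases Set.eq_empty_or_nonempty A with hA | hA
    · rw [hA]; simp
    · -- u = sup A
      set u : ℝ := sSup A with hudef
      have hAbdd : BddAbove A := ⟨G t, fun z hz => hz.2.2⟩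
      obtain ⟨z₀, hz₀⟩ := hA
      have hcu : c < u := lt_of_lt_of_le hz₀.2.1 (le_csSup hAbdd hz₀)
      have huGt : u ≤ G t := csSup_le ⟨z₀, hz₀⟩ (fun z hz => hz.2.2)
      have hvolA : volume A ≤ ENNReal.ofReal (u - c) := by
        have hsub : A ⊆ Set.Ioc c u := fun z hz => ⟨hz.2.1, le_csSup hAbdd hz⟩
        calc volume A ≤ volume (Set.Ioc c u) := measure_mono hsub
          _ = ENNReal.ofReal (u - c) := Real.volume_Ioc
      -- B and q
      set B : Set ℝ := {s ∈ Set.Icc t₀ t | G s < u} with hBdef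
      have ht₀B : t₀ ∈ B := ⟨⟨le_refl _, ht⟩, by rw [hGt₀]; exact hcu⟩
      have hBne : B.Nonempty := ⟨t₀, ht₀B⟩
      have hBbdd : BddAbove B := ⟨t, fun s hs => hs.1.2⟩
      set q : ℝ := sSup B with hqdef
      have ht₀q : t₀ ≤ q := le_csSup hBbdd ht₀B
      have hqt : q ≤ t := csSup_le hBne (fun s hs => hs.1.2)
      have hGq : u ≤ G q := by
        rcases eq_or_lt_of_le hqt with heq | hlt
        · rw [heq]; exact huGt
        · have hev : ∀ s ∈ Set.Ioc q t, u ≤ G s := by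
            intro s hs
            by_contra hcon
            push_neg at hcon
            have : s ∈ B := ⟨⟨le_trans ht₀q hs.1.le, hs.2⟩, hcon⟩
            exact absurd (le_csSup hBbdd this) (not_le.mpr hs.1)
          have htend : Filter.Tendsto G (nhdsWithin q (Set.Ioi q)) (nhds (G q)) :=
            (hGcont.continuousAt).continuousWithinAt.tendsto
          refine ge_of_tendsto htend ?_
          filter_upwards [Ioc_mem_nhdsGT_of_mem ⟨le_refl q, hlt⟩] with s hs
          exact hev s hs
      -- inclusion Ioo t₀ q ⊆ superlevel set of h₀ ∘ G intersected with Ioc t₀ t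
      have hincl : Set.Ioo t₀ q ⊆ {s | l < h₀ (G s)} ∩ Set.Ioc t₀ t := by
        intro s hs
        obtain ⟨b, hbB, hsb⟩ := exists_lt_of_lt_csSup hBne hs.2
        have hGsu : G s < u := lt_of_le_of_lt (hGmono hsb.le) hbB.2
        obtain ⟨z, hzA, hGsz⟩ := exists_lt_of_lt_csSup ⟨z₀, hz₀⟩ hGsu
        have hGs0 : G s ∈ Set.Ioi (0 : ℝ) := lt_of_lt_of_le hc (hGge s hs.1.le)
        have hz0 : z ∈ Set.Ioi (0 : ℝ) := lt_trans hc hzA.2.1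
        have : h₀ z ≤ h₀ (G s) := hanti hGs0 hz0 hGsz.le
        exact ⟨lt_of_lt_of_le hzA.1 this, hs.1, le_trans hs.2.le hqt⟩
      -- conclude
      have hstep : ∫⁻ s in Set.Ioo t₀ q, ENNReal.ofReal (g s)
          ≤ ∫⁻ s in {s | l < h₀ (G s)} ∩ Set.Ioc t₀ t, ENNReal.ofReal (g s) :=
        lintegral_mono_set hincl
      have hval : ENNReal.ofReal (G q - c) = ∫⁻ s in Set.Ioo t₀ q, ENNReal.ofReal (g s) := by
        have h1 : (∫ s in Set.Ioo t₀ q, g s) = G q - c := by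
          have : G q - c = ∫ u in t₀..q, g u := by simp [hGdef]
          rw [this, intervalIntegral.integral_of_le ht₀q,
            MeasureTheory.integral_Ioc_eq_integral_Ioo]
        rw [← h1]
        exact ofReal_integral_eq_lintegral_ofReal hgint.integrableOn
          (ae_of_all _ (fun s => hgnn s))
      calc volume A ≤ ENNReal.ofReal (u - c) := hvolA
        _ ≤ ENNReal.ofReal (G q - c) := ENNReal.ofReal_le_ofReal (by linarith)
        _ = ∫⁻ s in Set.Ioo t₀ q, ENNReal.ofReal (g s) := hval
        _ ≤ ∫⁻ s in {s | l < h₀ (G s)} ∩ Set.Ioc t₀ t, ENNReal.ofReal (g s) := hstep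
        _ = ∫⁻ s in {s | l < h₀ (G s)}, ENNReal.ofReal (g s)
              ∂(volume.restrict (Set.Ioc t₀ t)) := by
            rw [Measure.restrict_restrict hmeasS]
  -- layer cake on both sides
  have hLHS : ∫⁻ z in Set.Ioc c (G t), ENNReal.ofReal (h₀ z)
      = ∫⁻ l in Set.Ioi (0:ℝ), (volume.restrict (Set.Ioc c (G t))) {z | l < h₀ z} :=
    lintegral_eq_lintegral_meas_lt _ (ae_of_all _ hhnn) hhm.aemeasurable
  set ν := (volume.restrict (Set.Ioc t₀ t)).withDensity (fun s => ENNReal.ofReal (g s))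
    with hνdef
  have hRHS : ∫⁻ s, ENNReal.ofReal (h₀ (G s)) ∂ν
      = ∫⁻ l in Set.Ioi (0:ℝ), ν {s | l < h₀ (G s)} :=
    lintegral_eq_lintegral_meas_lt _ (ae_of_all _ (fun s => hhnn (G s)))
      ((hhm.comp hGcont.measurable)).aemeasurable
  have hRHS2 : ∫⁻ s, ENNReal.ofReal (h₀ (G s)) ∂ν
      = ∫⁻ s in Set.Ioc t₀ t, ENNReal.ofReal (h₀ (G s)) * ENNReal.ofReal (g s) := by
    have hfmeas : AEMeasurable (fun s => ENNReal.ofReal (g s))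
        (volume.restrict (Set.Ioc t₀ t)) :=
      ENNReal.measurable_ofReal.comp_aemeasurable hgm.restrict
    have hgmeas : AEMeasurable (fun s => ENNReal.ofReal (h₀ (G s)))
        (volume.restrict (Set.Ioc t₀ t)) :=
      ((hhm.comp hGcont.measurable)).ennreal_ofReal.aemeasurable
    rw [hνdef, lintegral_withDensity_eq_lintegral_mul₀ hfmeas hgmeas]
    exact lintegral_congr (fun s => by simp [mul_comm])
  calc ∫⁻ z in Set.Ioc c (G t), ENNReal.ofReal (h₀ z)
      = ∫⁻ l in Set.Ioi (0:ℝ), (volume.restrict (Set.Ioc c (G t))) {z | l < h₀ z} := hLHS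
    _ ≤ ∫⁻ l in Set.Ioi (0:ℝ), ν {s | l < h₀ (G s)} := lintegral_mono (fun l => key l)
    _ = ∫⁻ s, ENNReal.ofReal (h₀ (G s)) ∂ν := hRHS.symm
    _ = ∫⁻ s in Set.Ioc t₀ t, ENNReal.ofReal (h₀ (G s)) * ENNReal.ofReal (g s) := hRHS2

/-- Osgood's lemma, quantitative case `c > 0`: if
`f(t) ≤ c + ∫_{t₀}^t v(s) η(f(s)) ds` for a.e. `t ∈ [t₀,T]`, then
`M(c) ≤ M(f(t)) + ∫_{t₀}^t v(s) ds` for a.e. `t`, where `M(x) = ∫_x^a dz/η(z)`. -/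
theorem osgood_pos (a t₀ T c : ℝ) (ha : 0 < a) (htT : t₀ ≤ T) (hc : 0 < c)
    (η : ℝ → ℝ) (hηc : ContinuousOn η (Set.Icc 0 a)) (hηm : MonotoneOn η (Set.Icc 0 a))
    (hη0 : η 0 = 0) (hηpos : ∀ z ∈ Set.Ioc (0 : ℝ) a, 0 < η z)
    (f : ℝ → ℝ) (hf : Measurable f) (hfmem : ∀ t ∈ Set.Icc t₀ T, f t ∈ Set.Icc 0 a)
    (v : ℝ → ℝ) (hvnn : ∀ s ∈ Set.Icc t₀ T, 0 ≤ v s)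
    (hvint : IntegrableOn v (Set.Icc t₀ T))
    (hineq : ∀ᵐ t ∂(volume.restrict (Set.Icc t₀ T)),
      f t ≤ c + ∫ s in Set.Icc t₀ t, v s * η (f s)) :
    ∀ᵐ t ∂(volume.restrict (Set.Icc t₀ T)),
      osgoodM η a c ≤ osgoodM η a (f t) + ENNReal.ofReal (∫ s in Set.Icc t₀ t, v s) := by
  -- clamped version of η
  set clamp : ℝ → ℝ := fun z => max (min z a) 0 with hclampdef
  have hclamp_mem : ∀ z, clamp z ∈ Set.Icc 0 a :=
    fun z => ⟨le_max_right _ _, max_le (min_le_right _ _) ha.le⟩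
  have hclamp_cont : Continuous clamp := (continuous_id.min continuous_const).max
    continuous_const
  have hclamp_mono : Monotone clamp :=
    fun z z' h => max_le_max (min_le_min h (le_refl _)) (le_refl _)
  have hclamp_eq : ∀ z ∈ Set.Icc (0:ℝ) a, clamp z = z := by
    intro z hz
    simp [hclampdef, min_eq_left hz.2, max_eq_left hz.1]
  set η' : ℝ → ℝ := fun z => η (clamp z) with hη'def
  have hη'cont : Continuous η' := hηc.comp_continuous hclamp_cont hclamp_mem
  have hη'mono : Monotone η' :=
    fun z z' h => hηm (hclamp_mem z) (hclamp_mem z') (hclamp_mono h)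
  have hη'eq : ∀ z ∈ Set.Icc (0:ℝ) a, η' z = η z := by
    intro z hz; simp only [hη'def]; rw [hclamp_eq z hz]
  have hη'nn : ∀ z, 0 ≤ η' z := by
    intro z
    rw [← hη0]
    exact hηm ⟨le_refl _, ha.le⟩ (hclamp_mem z) (hclamp_mem z).1
  have hη'pos : ∀ z, 0 < z → 0 < η' z := by
    intro z hz
    have : clamp z ∈ Set.Ioc (0:ℝ) a := by
      constructor
      · simp only [hclampdef]
        exact lt_max_of_lt_left (lt_min hz ha)
      · exact (hclamp_mem z).2
    exact hηpos _ this
  have hη'le : ∀ z, η' z ≤ η a := by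
    intro z
    exact hηm (hclamp_mem z) ⟨ha.le, le_refl _⟩ (hclamp_mem z).2
  -- the kernel h₀
  set h₀ : ℝ → ℝ := fun z => if z ≤ a then 1 / η' z else 0 with hh₀def
  have hh₀m : Measurable h₀ :=
    Measurable.ite measurableSet_Iic (measurable_const.div hη'cont.measurable)
      measurable_const
  have hh₀nn : ∀ z, 0 ≤ h₀ z := by
    intro z
    simp only [hh₀def]
    split
    · exact div_nonneg zero_le_one (hη'nn z)
    · exact le_refl _
  have hanti : AntitoneOn h₀ (Set.Ioi (0:ℝ)) := by
    intro z hz z' hz' hzz'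
    simp only [hh₀def]
    by_cases h' : z' ≤ a
    · rw [if_pos h', if_pos (le_trans hzz' h')]
      exact one_div_le_one_div_of_le (hη'pos z hz) (hη'mono hzz')
    · rw [if_neg h']
      split
      · exact div_nonneg zero_le_one (hη'nn z)
      · exact le_refl _
  -- the density g
  set g : ℝ → ℝ := (Set.Icc t₀ T).indicator (fun s => v s * η' (f s)) with hgdef
  have hgnn : ∀ s, 0 ≤ g s := by
    intro s
    simp only [hgdef]
    by_cases hs : s ∈ Set.Icc t₀ T
    · rw [Set.indicator_of_mem hs]
      exact mul_nonneg (hvnn s hs) (hη'nn _)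
    · rw [Set.indicator_of_notMem hs]
  have hbase_aesm : AEStronglyMeasurable (fun s => v s * η' (f s))
      (volume.restrict (Set.Icc t₀ T)) :=
    hvint.aestronglyMeasurable.mul
      ((hη'cont.measurable.comp hf).aestronglyMeasurable)
  have hgaesm : AEStronglyMeasurable g volume :=
    (aestronglyMeasurable_indicator_iff measurableSet_Icc).mpr hbase_aesm
  have hgm : AEMeasurable g volume := hgaesm.aemeasurable
  have hgint : Integrable g := by
    rw [hgdef, integrable_indicator_iff measurableSet_Icc]
    refine Integrable.mono (hvint.const_mul (η a)) hbase_aesm ?_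
    refine ae_of_all _ (fun s => ?_)
    simp only [Real.norm_eq_abs]
    rw [abs_mul]
    have h1 : |η' (f s)| = η' (f s) := abs_of_nonneg (hη'nn _)
    calc |v s| * |η' (f s)| = |v s| * η' (f s) := by rw [h1]
      _ ≤ |v s| * η a := mul_le_mul_of_nonneg_left (hη'le _) (abs_nonneg _)
      _ = η a * |v s| := mul_comm _ _
      _ ≤ |η a * v s| := by rw [abs_mul, abs_of_nonneg (le_trans (hη'nn 0) (hη'le 0))]
  -- the primitive G and its relation to the hypothesis integral
  set G : ℝ → ℝ := fun s => c + ∫ u in t₀..s, g u with hGdef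
  have hGconn : ∀ x ∈ Set.Icc t₀ T, (∫ s in Set.Icc t₀ x, v s * η (f s)) = G x - c := by
    intro x hx
    have h1 : G x - c = ∫ u in t₀..x, g u := by simp [hGdef]
    rw [h1, intervalIntegral.integral_of_le hx.1,
      ← MeasureTheory.integral_Icc_eq_integral_Ioc]
    apply setIntegral_congr_fun measurableSet_Icc
    intro s hs
    have hsT : s ∈ Set.Icc t₀ T := ⟨hs.1, le_trans hs.2 hx.2⟩
    rw [hgdef]
    simp only [Set.indicator_of_mem hsT]
    rw [hη'eq _ (hfmem s hsT)]
  -- main argument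
  have hsub_ae : ∀ᵐ t ∂(volume.restrict (Set.Icc t₀ T)), t ∈ Set.Icc t₀ T :=
    ae_restrict_mem measurableSet_Icc
  filter_upwards [hineq, hsub_ae] with t hineqt htmem
  by_cases hca : a < c
  · have : Set.Ioc c a = ∅ := Set.Ioc_eq_empty (not_lt.mpr hca.le)
    rw [osgoodM, this]
    simp
  push_neg at hca
  have hft := hfmem t htmem
  by_cases hfc : f t ≤ c
  · have hmono : osgoodM η a c ≤ osgoodM η a (f t) := by
      apply lintegral_mono_set
      exact Set.Ioc_subset_Ioc_left hfc
    exact le_add_right hmono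
  push_neg at hfc
  -- split M(c) = ∫_{(c, f t]} + M(f t)
  have hsplit : Set.Ioc c a = Set.Ioc c (f t) ∪ Set.Ioc (f t) a :=
    (Set.Ioc_union_Ioc_eq_Ioc hfc.le hft.2).symm
  have hMsplit : osgoodM η a c
      = (∫⁻ z in Set.Ioc c (f t), ENNReal.ofReal (1 / η z)) + osgoodM η a (f t) := by
    rw [osgoodM, osgoodM, hsplit,
      lintegral_union measurableSet_Ioc (Set.Ioc_disjoint_Ioc_of_le le_rfl)]
  -- bound the middle piece
  have hftG : f t ≤ G t := by
    have := hGconn t htmem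
    linarith [hineqt]
  have hmid : (∫⁻ z in Set.Ioc c (f t), ENNReal.ofReal (1 / η z))
      ≤ ENNReal.ofReal (∫ s in Set.Icc t₀ t, v s) := by
    have hstep1 : (∫⁻ z in Set.Ioc c (f t), ENNReal.ofReal (1 / η z))
        = ∫⁻ z in Set.Ioc c (f t), ENNReal.ofReal (h₀ z) := by
      apply setLIntegral_congr_fun measurableSet_Ioc
      intro z hz
      have hza : z ≤ a := le_trans hz.2 hft.2
      have hz0a : z ∈ Set.Icc (0:ℝ) a := ⟨le_of_lt (lt_trans hc hz.1), hza⟩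
      simp only [hh₀def]
      rw [if_pos hza, hη'eq z hz0a]
    have hstep2 : (∫⁻ z in Set.Ioc c (f t), ENNReal.ofReal (h₀ z))
        ≤ ∫⁻ z in Set.Ioc c (G t), ENNReal.ofReal (h₀ z) :=
      lintegral_mono_set (Set.Ioc_subset_Ioc_right hftG)
    have hstep3 := osgood_cov t₀ t c htmem.1 hc g hgm hgnn hgint h₀ hh₀m hh₀nn hanti
    -- a.e. bound of the integrand by v
    have hineq_sub : ∀ᵐ s ∂(volume.restrict (Set.Ioc t₀ t)),
        f s ≤ c + ∫ u in Set.Icc t₀ s, v u * η (f u) := by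
      apply ae_restrict_of_ae_restrict_of_subset _ hineq
      intro s hs
      exact ⟨le_of_lt hs.1, le_trans hs.2 htmem.2⟩
    have hmem_sub : ∀ᵐ s ∂(volume.restrict (Set.Ioc t₀ t)), s ∈ Set.Ioc t₀ t :=
      ae_restrict_mem measurableSet_Ioc
    have hstep4 : (∫⁻ s in Set.Ioc t₀ t,
          ENNReal.ofReal (h₀ (c + ∫ u in t₀..s, g u)) * ENNReal.ofReal (g s))
        ≤ ∫⁻ s in Set.Ioc t₀ t, ENNReal.ofReal (v s) := by
      apply lintegral_mono_ae
      filter_upwards [hineq_sub, hmem_sub] with s hfs hs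
      have hsT : s ∈ Set.Icc t₀ T := ⟨le_of_lt hs.1, le_trans hs.2 htmem.2⟩
      have hgs : g s = v s * η' (f s) := by
        rw [hgdef]; exact Set.indicator_of_mem hsT _
      have hGs : G s = c + ∫ u in t₀..s, g u := rfl
      have hfsG : f s ≤ G s := by
        have := hGconn s hsT
        have h2 : G s - c = ∫ u in t₀..s, g u := by simp [hGdef]
        linarith
      by_cases hGa : (c + ∫ u in t₀..s, g u) ≤ a
      · have hη'pos' : 0 < η' (G s) := hη'pos _ (lt_of_lt_of_le hc (by
          have : c ≤ G s := by
            have hnn : 0 ≤ ∫ u in t₀..s, g u :=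
              intervalIntegral.integral_nonneg (le_of_lt hs.1) (fun u _ => hgnn u)
            simp only [hGdef]; linarith
          exact this))
        have hηle : η' (f s) ≤ η' (G s) := hη'mono hfsG
        simp only [hh₀def, if_pos hGa]
        rw [hgs, ← ENNReal.ofReal_mul (div_nonneg zero_le_one (hη'nn _))]
        apply ENNReal.ofReal_le_ofReal
        have : 1 / η' (G s) * (v s * η' (f s)) = v s * (η' (f s) / η' (G s)) := by
          ring
        rw [this]
        calc v s * (η' (f s) / η' (G s)) ≤ v s * 1 :=
              mul_le_mul_of_nonneg_left ((div_le_one hη'pos').mpr hηle) (hvnn s hsT)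
          _ = v s := mul_one _
      · simp only [hh₀def, if_neg hGa]
        simp [ENNReal.ofReal_le_ofReal (hvnn s hsT)]
    have hstep5 : (∫⁻ s in Set.Ioc t₀ t, ENNReal.ofReal (v s))
        = ENNReal.ofReal (∫ s in Set.Icc t₀ t, v s) := by
      rw [MeasureTheory.integral_Icc_eq_integral_Ioc]
      refine (ofReal_integral_eq_lintegral_ofReal ?_ ?_).symm
      · exact hvint.mono_set (fun s hs => ⟨le_of_lt hs.1, le_trans hs.2 htmem.2⟩)
      · filter_upwards [ae_restrict_mem measurableSet_Ioc] with s hs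
        exact hvnn s ⟨le_of_lt hs.1, le_trans hs.2 htmem.2⟩
    calc (∫⁻ z in Set.Ioc c (f t), ENNReal.ofReal (1 / η z))
        = ∫⁻ z in Set.Ioc c (f t), ENNReal.ofReal (h₀ z) := hstep1
      _ ≤ ∫⁻ z in Set.Ioc c (G t), ENNReal.ofReal (h₀ z) := hstep2
      _ ≤ ∫⁻ s in Set.Ioc t₀ t,
            ENNReal.ofReal (h₀ (c + ∫ u in t₀..s, g u)) * ENNReal.ofReal (g s) := hstep3
      _ ≤ ∫⁻ s in Set.Ioc t₀ t, ENNReal.ofReal (v s) := hstep4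
      _ = ENNReal.ofReal (∫ s in Set.Icc t₀ t, v s) := hstep5
  calc osgoodM η a c
      = (∫⁻ z in Set.Ioc c (f t), ENNReal.ofReal (1 / η z)) + osgoodM η a (f t) := hMsplit
    _ ≤ ENNReal.ofReal (∫ s in Set.Icc t₀ t, v s) + osgoodM η a (f t) :=
        add_le_add_left hmid _
    _ = osgoodM η a (f t) + ENNReal.ofReal (∫ s in Set.Icc t₀ t, v s) := add_comm _ _
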